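/- Let f be a formal power series with integer coefficients and constant term 1. If g, h and g', h' are two pairs of integer polynomials with constant term 1 such that f·h = g and f·h' = g' as formal power series, all complex roots of g and of g' are negative real numbers, and all complex roots of h and of h' are positive real numbers, then g = g' and h = h'. -/

import Mathlib

/-- Uniqueness of the numerator and denominator: if `f·h = g` and `f·h' = g'`
with all complex roots of `g, g'` negative reals and all complex roots of
`h, h'` positive reals, and all four polynomials have constant term `1`,
then `g = g'` and `h = h'`. -/
theorem rational_representation_unique (f : PowerSeries ℤ)
    (hf : PowerSeries.constantCoeff f = 1)
    (g h g' h' : Polynomial ℤ)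
    (hg0 : g.coeff 0 = 1) (hh0 : h.coeff 0 = 1)
    (hg0' : g'.coeff 0 = 1) (hh0' : h'.coeff 0 = 1)
    (heq : f * (h : PowerSeries ℤ) = (g : PowerSeries ℤ))
    (heq' : f * (h' : PowerSeries ℤ) = (g' : PowerSeries ℤ))
    (hgroots : ∀ z : ℂ, (g.map (Int.castRingHom ℂ)).IsRoot z → z.im = 0 ∧ z.re < 0)
    (hgroots' : ∀ z : ℂ, (g'.map (Int.castRingHom ℂ)).IsRoot z → z.im = 0 ∧ z.re < 0)
    (hhroots : ∀ z : ℂ, (h.map (Int.castRingHom ℂ)).IsRoot z → z.im = 0 ∧ 0 < z.re)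
    (hhroots' : ∀ z : ℂ, (h'.map (Int.castRingHom ℂ)).IsRoot z → z.im = 0 ∧ 0 < z.re) :
    g = g' ∧ h = h' := by
  -- Step 1: g * h' = g' * h in ℤ[X]
  have key : g * h' = g' * h := by
    rw [← Polynomial.coe_inj]
    push_cast
    calc (g : PowerSeries ℤ) * h' = f * h * h' := by rw [heq]
    _ = f * h' * h := by ring
    _ = (g' : PowerSeries ℤ) * h := by rw [heq']
  set G := g.map (Int.castRingHom ℂ) with hG
  set H := h.map (Int.castRingHom ℂ) with hH
  set G' := g'.map (Int.castRingHom ℂ) with hG'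
  set H' := h'.map (Int.castRingHom ℂ) with hH'
  have keyC : G * H' = G' * H := by
    rw [hG, hH, hG', hH', ← Polynomial.map_mul, ← Polynomial.map_mul, key]
  -- coprimality
  have cop : ∀ (p q : Polynomial ℤ),
      (∀ z : ℂ, (p.map (Int.castRingHom ℂ)).IsRoot z → z.im = 0 ∧ z.re < 0) →
      (∀ z : ℂ, (q.map (Int.castRingHom ℂ)).IsRoot z → z.im = 0 ∧ 0 < z.re) →
      IsCoprime (p.map (Int.castRingHom ℂ)) (q.map (Int.castRingHom ℂ)) := by
    intro p q hp hq
    rw [Polynomial.isCoprime_iff_aeval_ne_zero_of_isAlgClosed (k := ℂ) ℂ]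
    intro a
    by_contra hcon
    push_neg at hcon
    obtain ⟨h1, h2⟩ := hcon
    have r1 := hp a (by simpa [Polynomial.IsRoot, ← Polynomial.aeval_def] using h1)
    have r2 := hq a (by simpa [Polynomial.IsRoot, ← Polynomial.aeval_def] using h2)
    linarith [r1.2, r2.2]
  have copGH := cop g h hgroots hhroots
  have copGH' := cop g' h' hgroots' hhroots'
  rw [← hG, ← hH] at copGH
  rw [← hG', ← hH'] at copGH'
  have cg : G.coeff 0 = 1 := by rw [hG, Polynomial.coeff_map, hg0]; simp
  have cg' : G'.coeff 0 = 1 := by rw [hG', Polynomial.coeff_map, hg0']; simp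
  have d1 : G ∣ G' := copGH.dvd_of_dvd_mul_right ⟨H', keyC.symm⟩
  have d2 : G' ∣ G := copGH'.dvd_of_dvd_mul_right ⟨H, keyC⟩
  have hGne : G ≠ 0 := fun hz => by rw [hz] at cg; simp at cg
  obtain ⟨u, hu⟩ := (associated_of_dvd_dvd d1 d2).symm
  obtain ⟨r, hr, hru⟩ := Polynomial.isUnit_iff.mp u.isUnit
  have hco : G.coeff 0 = G'.coeff 0 * r := by
    rw [← hu, ← hru, Polynomial.coeff_mul_C]
  rw [cg, cg', one_mul] at hco
  have hGG : G = G' := by rw [← hu, ← hru, ← hco]; simp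
  have hgg : g = g' :=
    Polynomial.map_injective (Int.castRingHom ℂ) Int.cast_injective
      (by rw [← hG, ← hG', hGG])
  refine ⟨hgg, ?_⟩
  have hgne : g ≠ 0 := fun hz => by rw [hz] at hg0; simp at hg0
  have : g * h' = g * h := by rw [key, hgg]
  exact (mul_left_cancel₀ hgne this).symm
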